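/- arXiv:1204.5052 — 3 statements merged into one kernel-verified Lean document; each statement's English description precedes it below -/
import Mathlib

section
/- Lanczos restart recovery (Theorem 4.2): let A V_{m+k} = V_{m+k+1} T̄_{m+k} be the primary Lanczos relation, and let A V^{rr}_k = V^{rr}_{k+1} T̄^{rr}_k be the restarted Lanczos relation with starting vector v^{rr}_1 = v_{m+1}. Assume m+1 > k and let T̂_{2k+1} be the trailing (2k+1)×(2k+1) principal submatrix of T_{m+k+1} (rows/columns m+1−k through m+1+k). Then the tridiagonal matrix produced by k steps of the Lanczos process for T̂_{2k+1} with starting vector e_{k+1} ∈ ℂ^{2k+1} equals T̄^{rr}_k. -/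
open Matrix Finset

open Matrix Finset

private lemma sum_star_expand {ι κ : Type*} [Fintype ι] [Fintype κ] [DecidableEq κ]
    (v : κ → ι → ℂ) (a : κ) (c : κ → ℂ)
    (ho : ∀ p q : κ, (∑ r, star (v p r) * v q r) = if p = q then 1 else 0) :
    (∑ r, star (v a r) * ∑ b, c b * v b r) = c a := by
  have h1 : ∀ r, star (v a r) * ∑ b, c b * v b r = ∑ b, c b * (star (v a r) * v b r) := by
    intro r; rw [Finset.mul_sum]; exact Finset.sum_congr rfl fun b _ => by ring
  simp only [h1]
  rw [Finset.sum_comm]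
  simp only [← Finset.mul_sum, ho]
  simp [Finset.sum_ite_eq]

private lemma fin_int_coe {N : ℕ} (a : Fin N) : ((a : ℤ)) = ((a.val : ℕ) : ℤ) := rfl

private lemma lanczos_support {k : ℕ} (T : Matrix (Fin (2*k+1)) (Fin (2*k+1)) ℂ)
    (hTtri : ∀ i j : Fin (2*k+1), 1 ≤ j.val → j.val + 1 ≤ 2*k →
      (i.val + 1 < j.val ∨ j.val + 1 < i.val) → T i j = 0)
    (u : Fin (k+1) → Fin (2*k+1) → ℂ)
    (h0 : ∀ i : Fin (2*k+1), i.val ≠ k → u ⟨0, Nat.succ_pos k⟩ i = 0)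
    (S : Matrix (Fin (k+1)) (Fin k) ℝ)
    (hStri : ∀ (i : Fin (k+1)) (j : Fin k), (i.val > j.val + 1 ∨ j.val > i.val + 1) → S i j = 0)
    (hSpos : ∀ j : Fin k, S j.succ j ≠ 0)
    (hrel : ∀ (c : Fin k) (i : Fin (2*k+1)),
      (∑ j, T i j * u c.castSucc j) = ∑ a, (S a c : ℂ) * u a i) :
    ∀ (c : Fin (k+1)) (i : Fin (2*k+1)), (i.val + c.val < k ∨ k + c.val < i.val) → u c i = 0 := by
  suffices H : ∀ cv : ℕ, ∀ (hc : cv < k+1), ∀ i : Fin (2*k+1),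
      (i.val + cv < k ∨ k + cv < i.val) → u ⟨cv, hc⟩ i = 0 by
    intro c i hi; exact H c.val c.isLt i hi
  intro cv
  induction cv using Nat.strong_induction_on with
  | _ cv ih =>
    intro hc i hi
    match cv, hc, hi with
    | 0, hc, hi => exact h0 i (by omega)
    | (c+1), hc, hi =>
      have hck : c < k := by omega
      have h := hrel ⟨c, hck⟩ i
      have hL : (∑ j, T i j * u (Fin.castSucc ⟨c, hck⟩) j) = 0 := by
        apply Finset.sum_eq_zero
        intro j _
        by_cases hj : j.val + c < k ∨ k + c < j.val
        · have : u (Fin.castSucc ⟨c, hck⟩) j = 0 := ih c (by omega) (by omega) j hj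
          rw [this, mul_zero]
        · push_neg at hj
          have hT : T i j = 0 := by
            apply hTtri i j (by omega) (by omega) (by omega)
          rw [hT, zero_mul]
      have hR : (∑ a : Fin (k+1), (S a ⟨c, hck⟩ : ℂ) * u a i) = 0 := by rw [← h]; exact hL
      have hsingle := Finset.sum_eq_single ((⟨c, hck⟩ : Fin k).succ)
        (f := fun a : Fin (k+1) => (S a ⟨c, hck⟩ : ℂ) * u a i)
        (by
          intro a _ ha
          show (S a ⟨c, hck⟩ : ℂ) * u a i = 0
          by_cases hav : a.val ≤ c
          · have : u a i = 0 := ih a.val (by omega) (by omega) i (by omega)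
            rw [this, mul_zero]
          · have hav2 : a.val > c + 1 := by
              rcases Nat.lt_or_ge (c+1) a.val with h1 | h1
              · exact h1
              · exfalso; apply ha; apply Fin.ext; simp; omega
            have : S a ⟨c, hck⟩ = 0 := hStri a ⟨c, hck⟩ (by left; simpa using hav2)
            rw [this]; simp)
        (by intro habs; exact absurd (Finset.mem_univ _) habs)
      rw [hsingle] at hR
      rcases mul_eq_zero.1 hR with h1 | h1
      · exact absurd (by exact_mod_cast h1) (hSpos ⟨c, hck⟩)
      · exact h1
private lemma lanczos_unique {n k : ℕ} (M : Matrix (Fin n) (Fin n) ℂ)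
    (x y : Fin (k+1) → Fin n → ℂ)
    (hxo : ∀ a b : Fin (k+1), (∑ r, star (x a r) * x b r) = if a = b then 1 else 0)
    (hyo : ∀ a b : Fin (k+1), (∑ r, star (y a r) * y b r) = if a = b then 1 else 0)
    (h0 : x ⟨0, k.succ_pos⟩ = y ⟨0, k.succ_pos⟩)
    (S R : Matrix (Fin (k+1)) (Fin k) ℝ)
    (hStri : ∀ (i : Fin (k+1)) (j : Fin k), (i.val > j.val + 1 ∨ j.val > i.val + 1) → S i j = 0)
    (hRtri : ∀ (i : Fin (k+1)) (j : Fin k), (i.val > j.val + 1 ∨ j.val > i.val + 1) → R i j = 0)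
    (hSpos : ∀ j : Fin k, 0 < S j.succ j)
    (hRpos : ∀ j : Fin k, 0 < R j.succ j)
    (hxrel : ∀ (c : Fin k) (r : Fin n),
      (∑ s, M r s * x c.castSucc s) = ∑ a, (S a c : ℂ) * x a r)
    (hyrel : ∀ (c : Fin k) (r : Fin n),
      (∑ s, M r s * y c.castSucc s) = ∑ a, (R a c : ℂ) * y a r) :
    S = R := by
  -- inner product identities
  have hipS : ∀ (a : Fin (k+1)) (c : Fin k),
      (∑ r, star (x a r) * ∑ s, M r s * x c.castSucc s) = (S a c : ℂ) := by
    intro a c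
    simp only [hxrel]
    exact sum_star_expand x a (fun b => (S b c : ℂ)) hxo
  have hipR : ∀ (a : Fin (k+1)) (c : Fin k),
      (∑ r, star (y a r) * ∑ s, M r s * y c.castSucc s) = (R a c : ℂ) := by
    intro a c
    simp only [hyrel]
    exact sum_star_expand y a (fun b => (R b c : ℂ)) hyo
  -- all columns are equal
  have key : ∀ cv : ℕ, ∀ hc : cv < k + 1, x ⟨cv, hc⟩ = y ⟨cv, hc⟩ := by
    intro cv
    induction cv using Nat.strong_induction_on with
    | _ cv ih =>
      intro hc
      match cv, hc with
      | 0, hc => exact h0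
      | (c+1), hc =>
        have hck : c < k := by omega
        have hxy : ∀ a : Fin (k+1), a.val ≤ c → x a = y a := by
          intro a ha
          exact ih a.val (by omega) a.isLt
        have hcc : x (Fin.castSucc ⟨c, hck⟩) = y (Fin.castSucc ⟨c, hck⟩) :=
          hxy _ (by simp)
        -- coefficients at a.val ≤ c agree
        have hcoef : ∀ a : Fin (k+1), a ≠ (⟨c, hck⟩ : Fin k).succ → ∀ r,
            (S a ⟨c, hck⟩ : ℂ) * x a r = (R a ⟨c, hck⟩ : ℂ) * y a r := by
          intro a ha r
          by_cases hav : a.val ≤ c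
          · have h1 : (S a ⟨c, hck⟩ : ℂ) = (R a ⟨c, hck⟩ : ℂ) := by
              rw [← hipS a ⟨c, hck⟩, ← hipR a ⟨c, hck⟩, ← hxy a hav, ← hcc]
            rw [h1, hxy a hav]
          · have hav2 : a.val > c + 1 := by
              rcases Nat.lt_or_ge (c+1) a.val with h1 | h1
              · exact h1
              · exfalso; apply ha; apply Fin.ext; simp; omega
            have h1 : S a ⟨c, hck⟩ = 0 := hStri a ⟨c, hck⟩ (by left; simpa using hav2)
            have h2 : R a ⟨c, hck⟩ = 0 := hRtri a ⟨c, hck⟩ (by left; simpa using hav2)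
            rw [h1, h2]; simp
        -- the residual equation
        set sc : Fin (k+1) := (⟨c, hck⟩ : Fin k).succ with hsc
        have hres : ∀ r, (S sc ⟨c, hck⟩ : ℂ) * x sc r = (R sc ⟨c, hck⟩ : ℂ) * y sc r := by
          intro r
          have h3 : (∑ a, (S a ⟨c, hck⟩ : ℂ) * x a r) = ∑ a, (R a ⟨c, hck⟩ : ℂ) * y a r := by
            rw [← hxrel ⟨c, hck⟩ r, ← hyrel ⟨c, hck⟩ r, hcc]
          rw [← Finset.add_sum_erase _ _ (Finset.mem_univ sc),
              ← Finset.add_sum_erase _ _ (Finset.mem_univ sc)] at h3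
          have h4 : (∑ a ∈ Finset.univ.erase sc, (S a ⟨c, hck⟩ : ℂ) * x a r)
              = ∑ a ∈ Finset.univ.erase sc, (R a ⟨c, hck⟩ : ℂ) * y a r := by
            apply Finset.sum_congr rfl
            intro a ha
            exact hcoef a (Finset.ne_of_mem_erase ha) r
          rw [h4] at h3
          exact add_right_cancel h3
        -- equal coefficients on the subdiagonal
        have hnorm : ((S sc ⟨c, hck⟩ : ℂ)) ^ 2 = ((R sc ⟨c, hck⟩ : ℂ)) ^ 2 := by
          have e1 : (∑ r, star ((S sc ⟨c, hck⟩ : ℂ) * x sc r) * ((S sc ⟨c, hck⟩ : ℂ) * x sc r))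
              = (S sc ⟨c, hck⟩ : ℂ) ^ 2 := by
            have := hxo sc sc
            calc (∑ r, star ((S sc ⟨c, hck⟩ : ℂ) * x sc r) * ((S sc ⟨c, hck⟩ : ℂ) * x sc r))
                = (S sc ⟨c, hck⟩ : ℂ) ^ 2 * ∑ r, star (x sc r) * x sc r := by
                  rw [Finset.mul_sum]
                  apply Finset.sum_congr rfl
                  intro r _
                  simp only [star_mul']
                  rw [Complex.star_def, Complex.conj_ofReal]
                  ring
              _ = (S sc ⟨c, hck⟩ : ℂ) ^ 2 := by rw [this]; simp
          have e2 : (∑ r, star ((R sc ⟨c, hck⟩ : ℂ) * y sc r) * ((R sc ⟨c, hck⟩ : ℂ) * y sc r))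
              = (R sc ⟨c, hck⟩ : ℂ) ^ 2 := by
            have := hyo sc sc
            calc (∑ r, star ((R sc ⟨c, hck⟩ : ℂ) * y sc r) * ((R sc ⟨c, hck⟩ : ℂ) * y sc r))
                = (R sc ⟨c, hck⟩ : ℂ) ^ 2 * ∑ r, star (y sc r) * y sc r := by
                  rw [Finset.mul_sum]
                  apply Finset.sum_congr rfl
                  intro r _
                  simp only [star_mul']
                  rw [Complex.star_def, Complex.conj_ofReal]
                  ring
              _ = (R sc ⟨c, hck⟩ : ℂ) ^ 2 := by rw [this]; simp
          rw [← e1, ← e2]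
          apply Finset.sum_congr rfl
          intro r _
          rw [hres r]
        have hSR : S sc ⟨c, hck⟩ = R sc ⟨c, hck⟩ := by
          have h5 : (S sc ⟨c, hck⟩ : ℝ) ^ 2 = (R sc ⟨c, hck⟩ : ℝ) ^ 2 := by
            exact_mod_cast hnorm
          nlinarith [hSpos ⟨c, hck⟩, hRpos ⟨c, hck⟩]
        have hSne : (S sc ⟨c, hck⟩ : ℂ) ≠ 0 := by
          exact_mod_cast ne_of_gt (hSpos ⟨c, hck⟩)
        have : x sc = y sc := by
          funext r
          have := hres r
          rw [← hSR] at this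
          exact mul_left_cancel₀ hSne this
        exact this
  have hxyall : ∀ a : Fin (k+1), x a = y a := fun a => key a.val a.isLt
  ext a c
  have e1 := hipS a c
  have e2 := hipR a c
  simp only [← hxyall] at e2
  rw [e1] at e2
  exact_mod_cast e2


/-- Lanczos restart recovery: let `A V_{m+k} = V_{m+k+1} T̄_{m+k}` be the primary Lanczos
relation and `A V^rr_k = V^rr_{k+1} T̄^rr_k` the restarted Lanczos relation starting with
`v^rr₁ = v_{m+1}`. With `m + 1 > k`, let `T̂_{2k+1}` be the trailing `(2k+1) × (2k+1)`
principal submatrix of `T_{m+k+1} = V_{m+k+1}ᴴ A V_{m+k+1}`. Then the tridiagonal matrix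
produced by `k` steps of the Lanczos process for `T̂_{2k+1}` with starting vector
`e_{k+1} ∈ ℂ^{2k+1}` equals `T̄^rr_k` (by essential uniqueness, any such Lanczos relation
for `T̂_{2k+1}` has its tridiagonal matrix equal to `T̄^rr_k`). -/
theorem stmt17 {n m k : ℕ} (hmk : k < m + 1)
    (A : Matrix (Fin n) (Fin n) ℂ) (hA : A.IsHermitian)
    -- primary Lanczos relation
    (V : Matrix (Fin n) (Fin (m + k + 1)) ℂ) (hV : Vᴴ * V = 1)
    (Tbar : Matrix (Fin (m + k + 1)) (Fin (m + k)) ℝ)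
    (hTtri : ∀ (i : Fin (m + k + 1)) (j : Fin (m + k)),
      ((i : ℤ) - (j : ℤ) > 1 ∨ (j : ℤ) - (i : ℤ) > 1) → Tbar i j = 0)
    (hTpos : ∀ j : Fin (m + k), 0 < Tbar j.succ j)
    (hVrel : A * V.submatrix id Fin.castSucc = V * Tbar.map (fun x => (x : ℂ)))
    -- restarted Lanczos relation, starting vector v^rr₁ = v_{m+1}
    (W : Matrix (Fin n) (Fin (k + 1)) ℂ) (hW : Wᴴ * W = 1)
    (hWcol : (fun i => W i ⟨0, by omega⟩) = fun i => V i ⟨m, by omega⟩)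
    (Sbar : Matrix (Fin (k + 1)) (Fin k) ℝ)
    (hStri : ∀ (i : Fin (k + 1)) (j : Fin k),
      ((i : ℤ) - (j : ℤ) > 1 ∨ (j : ℤ) - (i : ℤ) > 1) → Sbar i j = 0)
    (hSpos : ∀ j : Fin k, 0 < Sbar j.succ j)
    (hWrel : A * W.submatrix id Fin.castSucc = W * Sbar.map (fun x => (x : ℂ))) :
    -- the trailing (2k+1) × (2k+1) principal submatrix of T_{m+k+1} = Vᴴ A V
    let emb : Fin (2 * k + 1) → Fin (m + k + 1) :=
      fun i => ⟨m - k + (i : ℕ), by have := i.isLt; omega⟩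
    let That : Matrix (Fin (2 * k + 1)) (Fin (2 * k + 1)) ℂ :=
      (Vᴴ * A * V).submatrix emb emb
    -- any k-step Lanczos relation for T̂ with starting vector e_{k+1} has
    -- its tridiagonal matrix equal to T̄^rr_k = Sbar
    ∀ (U : Matrix (Fin (2 * k + 1)) (Fin (k + 1)) ℂ), Uᴴ * U = 1 →
      (fun i => U i ⟨0, by omega⟩) = Pi.single (⟨k, by omega⟩ : Fin (2 * k + 1)) (1 : ℂ) →
      ∀ (Shat : Matrix (Fin (k + 1)) (Fin k) ℝ),
        (∀ (i : Fin (k + 1)) (j : Fin k),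
          ((i : ℤ) - (j : ℤ) > 1 ∨ (j : ℤ) - (i : ℤ) > 1) → Shat i j = 0) →
        (∀ j : Fin k, 0 < Shat j.succ j) →
        That * U.submatrix id Fin.castSucc = U * Shat.map (fun x => (x : ℂ)) →
        Shat = Sbar := by
  intro emb That U hUU hU0 Shat hShtri hShpos hUrel
  have hk : k ≤ m := by omega
  have hemb : ∀ i : Fin (2*k+1), (emb i).val = m - k + i.val := fun _ => rfl
  have hinj : Function.Injective emb := by
    intro a b hab
    have h1 : (emb a).val = (emb b).val := by rw [hab]
    rw [hemb, hemb] at h1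
    exact Fin.ext (by omega)
  -- orthonormality, entrywise
  have hVo : ∀ p q : Fin (m+k+1), (∑ r, star (V r p) * V r q) = if p = q then 1 else 0 := by
    intro p q
    have h := congrFun (congrFun hV p) q
    simpa [Matrix.mul_apply, Matrix.conjTranspose_apply, Matrix.one_apply] using h
  have hWo : ∀ p q : Fin (k+1), (∑ r, star (W r p) * W r q) = if p = q then 1 else 0 := by
    intro p q
    have h := congrFun (congrFun hW p) q
    simpa [Matrix.mul_apply, Matrix.conjTranspose_apply, Matrix.one_apply] using h
  have hUo : ∀ p q : Fin (k+1), (∑ r, star (U r p) * U r q) = if p = q then 1 else 0 := by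
    intro p q
    have h := congrFun (congrFun hUU p) q
    simpa [Matrix.mul_apply, Matrix.conjTranspose_apply, Matrix.one_apply] using h
  -- the primary relation, column form
  have hAVcol : ∀ (q : Fin (m+k)) (r : Fin n),
      (∑ s, A r s * V s q.castSucc) = ∑ p, ((Tbar p q : ℝ) : ℂ) * V r p := by
    intro q r
    have h := congrFun (congrFun hVrel r) q
    simp only [Matrix.mul_apply, Matrix.submatrix_apply, Matrix.map_apply, id] at h
    rw [h]
    exact Finset.sum_congr rfl fun p _ => by ring
  -- entries of V^H A V in the valid columns
  have hTentry : ∀ (p : Fin (m+k+1)) (q : Fin (m+k)),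
      (Vᴴ * A * V) p q.castSucc = ((Tbar p q : ℝ) : ℂ) := by
    intro p q
    have h1 : (Vᴴ * A * V) p q.castSucc
        = ∑ s, star (V s p) * ∑ t, A s t * V t q.castSucc := by
      rw [Matrix.mul_assoc]
      simp [Matrix.mul_apply, Matrix.conjTranspose_apply]
    rw [h1]
    simp only [hAVcol]
    exact sum_star_expand (fun p r => V r p) p (fun p' => ((Tbar p' q : ℝ) : ℂ)) hVo
  have hThatE : ∀ (i j : Fin (2*k+1)) (hj : (emb j).val < m + k),
      That i j = ((Tbar (emb i) ⟨(emb j).val, hj⟩ : ℝ) : ℂ) := by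
    intro i j hj
    have h1 : That i j = (Vᴴ * A * V) (emb i) (emb j) := rfl
    rw [h1]
    have h2 : emb j = Fin.castSucc (⟨(emb j).val, hj⟩ : Fin (m+k)) := Fin.ext rfl
    conv_lhs => rw [h2]
    exact hTentry (emb i) ⟨(emb j).val, hj⟩
  have hThat_tri : ∀ i j : Fin (2*k+1), 1 ≤ j.val → j.val + 1 ≤ 2*k →
      (i.val + 1 < j.val ∨ j.val + 1 < i.val) → That i j = 0 := by
    intro i j hj1 hj2 hd
    have hj : (emb j).val < m + k := by rw [hemb]; omega
    rw [hThatE i j hj]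
    have h0 : Tbar (emb i) ⟨(emb j).val, hj⟩ = 0 := by
      apply hTtri
      rw [fin_int_coe, fin_int_coe]
      simp only [hemb]
      omega
    rw [h0]; simp
  -- reindexing sums over the window
  have hreindex : ∀ g : Fin (m+k+1) → ℂ, (∀ p : Fin (m+k+1), p.val < m - k → g p = 0) →
      (∑ p, g p) = ∑ i : Fin (2*k+1), g (emb i) := by
    intro g hg
    have h1 : (∑ i : Fin (2*k+1), g (emb i)) = ∑ p ∈ Finset.univ.image emb, g p :=
      (Finset.sum_image (fun a _ b _ h => hinj h)).symm
    have h2 : (∑ p ∈ Finset.univ.image emb, g p) = ∑ p, g p := by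
      apply Finset.sum_subset (Finset.subset_univ _)
      intro p _ hp
      apply hg
      by_contra hlt
      push_neg at hlt
      apply hp
      rw [Finset.mem_image]
      refine ⟨⟨p.val - (m-k), by have := p.isLt; omega⟩, Finset.mem_univ _, ?_⟩
      apply Fin.ext
      rw [hemb]
      simp
      omega
    rw [h1, h2]
  -- the subspace lemma : A acts like That on the window, away from the boundary
  have hsub : ∀ (x : Fin (2*k+1) → ℂ), (∀ j : Fin (2*k+1), (j.val = 0 ∨ j.val = 2*k) → x j = 0) →
      ∀ r, (∑ s, A r s * ∑ i, V s (emb i) * x i) = ∑ i, V r (emb i) * ∑ j, That i j * x j := by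
    intro x hx r
    have step1 : (∑ s, A r s * ∑ i, V s (emb i) * x i)
        = ∑ j, x j * ∑ s, A r s * V s (emb j) := by
      simp only [Finset.mul_sum]
      rw [Finset.sum_comm]
      refine Finset.sum_congr rfl fun j _ => ?_
      exact Finset.sum_congr rfl fun s _ => by ring
    have step3 : (∑ i, V r (emb i) * ∑ j, That i j * x j)
        = ∑ j, x j * ∑ i, V r (emb i) * That i j := by
      simp only [Finset.mul_sum]
      rw [Finset.sum_comm]
      refine Finset.sum_congr rfl fun j _ => ?_
      exact Finset.sum_congr rfl fun i _ => by ring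
    rw [step1, step3]
    refine Finset.sum_congr rfl fun j _ => ?_
    by_cases hxj : x j = 0
    · rw [hxj]; simp
    · have hj1 : 1 ≤ j.val := by
        by_contra hcon
        exact hxj (hx j (Or.inl (by omega)))
      have hj2 : j.val + 1 ≤ 2*k := by
        have := j.isLt
        by_contra hcon
        exact hxj (hx j (Or.inr (by omega)))
      congr 1
      have hjlt : (emb j).val < m + k := by rw [hemb]; omega
      have hc : emb j = Fin.castSucc (⟨(emb j).val, hjlt⟩ : Fin (m+k)) := Fin.ext rfl
      calc ∑ s, A r s * V s (emb j)
          = ∑ s, A r s * V s (Fin.castSucc (⟨(emb j).val, hjlt⟩ : Fin (m+k))) := by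
            conv_lhs => rw [hc]
        _ = ∑ p, ((Tbar p ⟨(emb j).val, hjlt⟩ : ℝ) : ℂ) * V r p := hAVcol _ r
        _ = ∑ i, ((Tbar (emb i) ⟨(emb j).val, hjlt⟩ : ℝ) : ℂ) * V r (emb i) := by
            apply hreindex
            intro p hp
            have h0 : Tbar p ⟨(emb j).val, hjlt⟩ = 0 := by
              apply hTtri
              right
              rw [fin_int_coe, fin_int_coe]
              simp only [hemb]
              omega
            rw [h0]; simp
        _ = ∑ i, V r (emb i) * That i j := by
            refine Finset.sum_congr rfl fun i _ => ?_
            rw [hThatE i j hjlt]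
            ring
  -- isometry of the window embedding
  have hMo : (V.submatrix id emb)ᴴ * (V.submatrix id emb) = 1 := by
    ext a b
    simp only [Matrix.mul_apply, Matrix.conjTranspose_apply, Matrix.submatrix_apply, id]
    rw [hVo (emb a) (emb b)]
    by_cases hab : a = b
    · subst hab; simp
    · rw [if_neg (fun h => hab (hinj h)), Matrix.one_apply_ne hab]
  have hEip : ∀ x y : Fin (2*k+1) → ℂ,
      (∑ r, star (∑ i, V r (emb i) * x i) * ∑ i, V r (emb i) * y i)
        = ∑ i, star (x i) * y i := by
    intro x y
    have h1 : ∀ z : Fin (2*k+1) → ℂ, ∀ r,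
        (∑ i, V r (emb i) * z i) = ((V.submatrix id emb) *ᵥ z) r := by
      intro z r; simp [Matrix.mulVec, dotProduct, Matrix.submatrix_apply]
    simp only [h1]
    have h2 : star ((V.submatrix id emb) *ᵥ x) ⬝ᵥ ((V.submatrix id emb) *ᵥ y) = star x ⬝ᵥ y := by
      rw [Matrix.star_mulVec, Matrix.dotProduct_mulVec, Matrix.vecMul_vecMul, hMo,
        Matrix.vecMul_one]
    simpa [dotProduct] using h2
  -- restarted relation, column form
  have hWrelc : ∀ (c : Fin k) (r : Fin n),
      (∑ s, A r s * W s c.castSucc) = ∑ a, ((Sbar a c : ℝ) : ℂ) * W r a := by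
    intro c r
    have h := congrFun (congrFun hWrel r) c
    simp only [Matrix.mul_apply, Matrix.submatrix_apply, Matrix.map_apply, id] at h
    rw [h]
    exact Finset.sum_congr rfl fun a _ => by ring
  -- hat relation, column form
  have hUrelc : ∀ (c : Fin k) (i : Fin (2*k+1)),
      (∑ j, That i j * U j c.castSucc) = ∑ a, ((Shat a c : ℝ) : ℂ) * U i a := by
    intro c i
    have h := congrFun (congrFun hUrel i) c
    simp only [Matrix.mul_apply, Matrix.submatrix_apply, Matrix.map_apply, id] at h
    rw [h]
    exact Finset.sum_congr rfl fun a _ => by ring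
  -- ℕ-versions of tridiagonality
  have hShtriN : ∀ (i : Fin (k+1)) (j : Fin k),
      (i.val > j.val + 1 ∨ j.val > i.val + 1) → Shat i j = 0 := by
    intro i j h
    apply hShtri
    rw [fin_int_coe, fin_int_coe]
    omega
  have hStriN : ∀ (i : Fin (k+1)) (j : Fin k),
      (i.val > j.val + 1 ∨ j.val > i.val + 1) → Sbar i j = 0 := by
    intro i j h
    apply hStri
    rw [fin_int_coe, fin_int_coe]
    omega
  -- support of the hat Lanczos vectors
  have hsupp : ∀ (c : Fin (k+1)) (i : Fin (2*k+1)),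
      (i.val + c.val < k ∨ k + c.val < i.val) → U i c = 0 := by
    have h0 : ∀ i : Fin (2*k+1), i.val ≠ k →
        (fun (c : Fin (k+1)) (i : Fin (2*k+1)) => U i c) ⟨0, Nat.succ_pos k⟩ i = 0 := by
      intro i hi
      have h := congrFun hU0 i
      show U i _ = 0
      rw [h]
      exact Pi.single_eq_of_ne (fun hcon => hi (by rw [hcon])) 1
    exact lanczos_support That hThat_tri (fun c i => U i c) h0 Shat hShtriN
      (fun j => ne_of_gt (hShpos j)) hUrelc
  -- instantiate the uniqueness lemma
  refine (lanczos_unique A (fun a r => W r a) (fun a r => ∑ i, V r (emb i) * U i a)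
    hWo ?_ ?_ Sbar Shat hStriN hShtriN hSpos hShpos hWrelc ?_).symm
  · -- orthonormality of embedded hat vectors
    intro a b
    rw [hEip]
    exact hUo a b
  · -- same first column
    funext r
    show W r _ = ∑ i, V r (emb i) * U i _
    have h6 := congrFun hWcol r
    rw [h6]
    symm
    rw [Finset.sum_eq_single (⟨k, by omega⟩ : Fin (2*k+1))]
    · have h7 : U (⟨k, by omega⟩ : Fin (2*k+1)) (⟨0, Nat.succ_pos k⟩ : Fin (k+1)) = 1 := by
        have h := congrFun hU0 (⟨k, by omega⟩ : Fin (2*k+1))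
        rw [h]
        exact Pi.single_eq_same _ _
      rw [h7, mul_one]
      congr 1
      apply Fin.ext
      rw [hemb]
      simp
      omega
    · intro i _ hi
      have h8 : U i (⟨0, Nat.succ_pos k⟩ : Fin (k+1)) = 0 := by
        have h := congrFun hU0 i
        rw [h]
        exact Pi.single_eq_of_ne hi 1
      rw [h8, mul_zero]
    · intro habs
      exact absurd (Finset.mem_univ _) habs
  · -- the relation for the embedded hat vectors
    intro c r
    show (∑ s, A r s * ∑ i, V s (emb i) * U i c.castSucc)
        = ∑ a, ((Shat a c : ℝ) : ℂ) * ∑ i, V r (emb i) * U i a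
    have hs : ∀ j : Fin (2*k+1), (j.val = 0 ∨ j.val = 2*k) → U j c.castSucc = 0 := by
      intro j hj
      apply hsupp c.castSucc j
      have hck := c.isLt
      rcases hj with h | h
      · left; simp only [Fin.coe_castSucc]; omega
      · right; simp only [Fin.coe_castSucc]; omega
    calc (∑ s, A r s * ∑ i, V s (emb i) * U i c.castSucc)
        = ∑ i, V r (emb i) * ∑ j, That i j * U j c.castSucc := hsub _ hs r
      _ = ∑ i, V r (emb i) * ∑ a, ((Shat a c : ℝ) : ℂ) * U i a := by
          exact Finset.sum_congr rfl fun i _ => by rw [hUrelc c i]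
      _ = ∑ a, ((Shat a c : ℝ) : ℂ) * ∑ i, V r (emb i) * U i a := by
          simp only [Finset.mul_sum]
          rw [Finset.sum_comm]
          exact Finset.sum_congr rfl fun a _ => Finset.sum_congr rfl fun i _ => by ring
end

section
/- Error formula for rational Lanczos approximation: let f(t) = Σᵢ ωᵢ/(t − σᵢ) and for each i let x_m^{(i)} satisfy b − (A − σᵢ I) x_m^{(i)} = ρ_m^{(i)} v_{m+1} for a common unit vector v_{m+1}. Then f(A)b − Σᵢ ωᵢ x_m^{(i)} = g_m(A) v_{m+1} where g_m(t) = Σᵢ ωᵢ ρ_m^{(i)}/(t − σᵢ); consequently ‖f(A)b − Σᵢ ωᵢ x_m^{(i)}‖₂² = v_{m+1}^H h_m(A) v_{m+1} with h_m = |g_m|². -/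
open Matrix

private lemma sum_mulVec' {n p : ℕ} (M : Fin p → Matrix (Fin n) (Fin n) ℂ) (b : Fin n → ℂ) :
    (∑ i, M i).mulVec b = ∑ i, (M i).mulVec b := by
  ext r
  simp [Matrix.mulVec, dotProduct, Matrix.sum_apply, Finset.sum_apply, Finset.sum_mul]
  rw [Finset.sum_comm]

/-- Error formula for the rational Lanczos approximation: with `f(A)b = Σᵢ ωᵢ (A−σᵢI)⁻¹b`
and `b − (A−σᵢI)xᵢ = ρᵢ v` for a common unit vector `v`, the error satisfies
`f(A)b − Σᵢ ωᵢ xᵢ = g(A) v` where `g(A) = Σᵢ ωᵢρᵢ (A−σᵢI)⁻¹`, and consequently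
`‖f(A)b − Σᵢ ωᵢ xᵢ‖₂² = vᴴ (g(A)ᴴ g(A)) v`. -/
theorem stmt18 {n p : ℕ} (A : Matrix (Fin n) (Fin n) ℂ) (hA : A.IsHermitian)
    (b v : Fin n → ℂ) (hv : star v ⬝ᵥ v = 1)
    (σ ω ρ : Fin p → ℂ)
    (hinv : ∀ i, IsUnit (A - σ i • (1 : Matrix (Fin n) (Fin n) ℂ)))
    (x : Fin p → Fin n → ℂ)
    (hres : ∀ i, b - (A - σ i • 1).mulVec (x i) = ρ i • v) :
    let err : Fin n → ℂ :=
      (∑ i, ω i • (A - σ i • (1 : Matrix (Fin n) (Fin n) ℂ))⁻¹).mulVec b - ∑ i, ω i • x i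
    let g : Matrix (Fin n) (Fin n) ℂ :=
      ∑ i, (ω i * ρ i) • (A - σ i • (1 : Matrix (Fin n) (Fin n) ℂ))⁻¹
    err = g.mulVec v ∧
      ((Real.sqrt (∑ r, ‖err r‖ ^ 2) ^ 2 : ℝ) : ℂ) = star v ⬝ᵥ (gᴴ * g).mulVec v := by
  intro err g
  have hdet : ∀ i, IsUnit (A - σ i • (1 : Matrix (Fin n) (Fin n) ℂ)).det := fun i =>
    (Matrix.isUnit_iff_isUnit_det _).mp (hinv i)
  have key : ∀ i, (A - σ i • (1 : Matrix (Fin n) (Fin n) ℂ))⁻¹.mulVec b - x i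
      = ρ i • (A - σ i • (1 : Matrix (Fin n) (Fin n) ℂ))⁻¹.mulVec v := by
    intro i
    have h := congrArg (fun w => (A - σ i • (1 : Matrix (Fin n) (Fin n) ℂ))⁻¹.mulVec w) (hres i)
    simpa [Matrix.mulVec_sub, Matrix.mulVec_mulVec,
      Matrix.nonsing_inv_mul _ (hdet i), Matrix.one_mulVec, Matrix.mulVec_smul] using h
  have herr : err = g.mulVec v := by
    show (∑ i, ω i • (A - σ i • (1 : Matrix (Fin n) (Fin n) ℂ))⁻¹).mulVec b - ∑ i, ω i • x i
      = g.mulVec v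
    rw [sum_mulVec' _ _]
    show _ = (∑ i, (ω i * ρ i) • (A - σ i • (1 : Matrix (Fin n) (Fin n) ℂ))⁻¹).mulVec v
    rw [sum_mulVec' _ _, ← Finset.sum_sub_distrib]
    refine Finset.sum_congr rfl fun i _ => ?_
    rw [Matrix.smul_mulVec, Matrix.smul_mulVec, ← smul_sub, key i,
      smul_smul]
  refine ⟨herr, ?_⟩
  have hrhs : star v ⬝ᵥ (gᴴ * g).mulVec v = star err ⬝ᵥ err := by
    rw [herr, ← Matrix.mulVec_mulVec, Matrix.dotProduct_mulVec, ← Matrix.star_mulVec]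
  rw [hrhs]
  have hnn : (0 : ℝ) ≤ ∑ r, ‖err r‖ ^ 2 :=
    Finset.sum_nonneg fun r _ => sq_nonneg _
  rw [Real.sq_sqrt hnn]
  push_cast
  rw [dotProduct]
  refine Finset.sum_congr rfl fun r _ => ?_
  rw [Pi.star_apply]
  rw [show star (err r) * err r = ((Complex.normSq (err r) : ℝ) : ℂ) by
    rw [← Complex.mul_conj, mul_comm]; rfl]
  norm_cast
  rw [← Complex.sq_norm]
end

section
/- Monotonicity of Gauss quadrature for t^{-1}: let A be Hermitian positive definite and T_m = V_m^H A V_m the tridiagonal matrices from the Lanczos process started with v_1 = b/‖b‖. Then the scalars e_1^H T_m^{-1} e_1 are positive and increase monotonically with m, and e_1^H T_n^{-1} e_1 = (1/‖b‖²) b^H A^{-1} b at termination step n; hence ‖b‖²(e_1^H T_{m+k}^{-1} e_1 − e_1^H T_m^{-1} e_1) is a lower bound for ‖x_* − x_m‖_A², where x_m = ‖b‖ V_m T_m^{-1} e_1 and x_* = A^{-1}b. -/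
open Matrix
open scoped ComplexOrder

lemma quad_conj {a c : ℕ} (W : Matrix (Fin a) (Fin c) ℂ) (S : Matrix (Fin a) (Fin a) ℂ)
    (u v : Fin c → ℂ) :
    star u ⬝ᵥ (Wᴴ * S * W).mulVec v = star (W.mulVec u) ⬝ᵥ S.mulVec (W.mulVec v) := by
  simp only [star_mulVec, dotProduct_mulVec, vecMul_vecMul, mulVec_mulVec, Matrix.mul_assoc]

lemma posDef_conj {a c : ℕ} {W : Matrix (Fin a) (Fin c) ℂ} {S : Matrix (Fin a) (Fin a) ℂ}
    (hS : S.PosDef) (hW : Wᴴ * W = 1) : (Wᴴ * S * W).PosDef := by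
  rw [posDef_iff_dotProduct_mulVec]
  constructor
  · show _ = _
    calc (Wᴴ * S * W)ᴴ = Wᴴ * Sᴴ * W := by
          simp [conjTranspose_mul, Matrix.mul_assoc]
      _ = Wᴴ * S * W := by rw [hS.isHermitian.eq]
  · intro x hx
    rw [quad_conj]
    refine hS.dotProduct_mulVec_pos (x := W.mulVec x) fun h => hx ?_
    have : (Wᴴ * W).mulVec x = Wᴴ.mulVec (W.mulVec x) := by rw [← mulVec_mulVec]
    rw [hW, h] at this
    simpa using this

variable {m m' k : ℕ}

/-- padding/inclusion matrix -/
def padM (h : m ≤ m') : Matrix (Fin m') (Fin m) ℂ :=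
  Matrix.of fun i j => if i = Fin.castLE h j then 1 else 0

lemma mul_padM (h : m ≤ m') (B : Matrix (Fin k) (Fin m') ℂ) :
    B * padM h = B.submatrix id (Fin.castLE h) := by
  ext i j
  simp [padM, Matrix.mul_apply]

lemma padMT_mul (h : m ≤ m') (B : Matrix (Fin m') (Fin k) ℂ) :
    (padM h)ᴴ * B = B.submatrix (Fin.castLE h) id := by
  ext i j
  simp [padM, Matrix.mul_apply, conjTranspose_apply]

lemma padM_conj_one (h : m ≤ m') : (padM h)ᴴ * padM h = 1 := by
  rw [padMT_mul]
  ext i j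
  simp [padM, Matrix.one_apply, Fin.castLE_inj]

lemma padM_sub (h : m ≤ m') (S : Matrix (Fin m') (Fin m') ℂ) :
    (padM h)ᴴ * S * padM h = S.submatrix (Fin.castLE h) (Fin.castLE h) := by
  rw [mul_padM h, padMT_mul]
  rfl

lemma padM_mulVec_single (h : m ≤ m') (j : Fin m) :
    (padM h).mulVec (Pi.single j 1 : Fin m → ℂ) = (Pi.single (Fin.castLE h j) 1 : Fin m' → ℂ) := by
  ext i
  rw [mulVec_single]
  simp [padM, Pi.single_apply]

lemma star_single (i : Fin m) : star (Pi.single i (1:ℂ) : Fin m → ℂ) = Pi.single i 1 := by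
  ext j
  simp [Pi.single_apply, apply_ite]

lemma re_dot_comm (x y : Fin k → ℂ) : (star x ⬝ᵥ y).re = (star y ⬝ᵥ x).re := by
  have h : star y ⬝ᵥ x = star (star x ⬝ᵥ y) := star_dotProduct _ _
  rw [h, Complex.star_def, Complex.conj_re]

lemma inv_mulVec_cancel {k : ℕ} {S : Matrix (Fin k) (Fin k) ℂ} (hS : S.PosDef)
    (v : Fin k → ℂ) : S.mulVec (S⁻¹.mulVec v) = v := by
  rw [mulVec_mulVec, Matrix.mul_nonsing_inv _ ((Matrix.isUnit_iff_isUnit_det _).mp hS.isUnit),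
    Matrix.one_mulVec]

lemma mono_lemma {m m' : ℕ} {S : Matrix (Fin m') (Fin m') ℂ} (hS : S.PosDef)
    {P : Matrix (Fin m') (Fin m) ℂ} (hP : Pᴴ * P = 1)
    {e : Fin m → ℂ} {e' : Fin m' → ℂ} (he : P.mulVec e = e') :
    (star e ⬝ᵥ (Pᴴ * S * P)⁻¹.mulVec e).re ≤ (star e' ⬝ᵥ S⁻¹.mulVec e').re := by
  have hS' : (Pᴴ * S * P).PosDef := posDef_conj hS hP
  set u : Fin m → ℂ := (Pᴴ * S * P)⁻¹.mulVec e with hu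
  set u' : Fin m' → ℂ := S⁻¹.mulVec e' with hu'
  set y : Fin m' → ℂ := P.mulVec u with hy
  have hSu' : S.mulVec u' = e' := inv_mulVec_cancel hS e'
  have hS'u : (Pᴴ * S * P).mulVec u = e := inv_mulVec_cancel hS' e
  have hPTe' : Pᴴ.mulVec e' = e := by
    rw [← he, mulVec_mulVec, hP, Matrix.one_mulVec]
  -- e'ᴴ y = eᴴ u
  have hey : star e' ⬝ᵥ y = star e ⬝ᵥ u := by
    have hsm := star_mulVec Pᴴ e'
    rw [conjTranspose_conjTranspose, hPTe'] at hsm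
    rw [hy, dotProduct_mulVec, ← hsm]
  -- expand nonneg quadratic form
  have key : 0 ≤ (star (y - u') ⬝ᵥ S.mulVec (y - u')).re :=
    hS.posSemidef.re_dotProduct_nonneg _
  have t1 : (star y ⬝ᵥ S.mulVec y).re = (star e ⬝ᵥ u).re := by
    have := quad_conj P S u u
    rw [hS'u] at this
    rw [hy, ← this, re_dot_comm]
  have t2 : (star y ⬝ᵥ S.mulVec u').re = (star e ⬝ᵥ u).re := by
    rw [hSu', re_dot_comm, hey]
  have t3 : (star u' ⬝ᵥ S.mulVec y).re = (star e ⬝ᵥ u).re := by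
    have hvm : star u' ᵥ* S = star e' := by
      rw [hu', star_mulVec, hS.inv.isHermitian.eq, vecMul_vecMul,
        Matrix.nonsing_inv_mul _ ((Matrix.isUnit_iff_isUnit_det _).mp hS.isUnit),
        Matrix.vecMul_one]
    rw [dotProduct_mulVec, hvm, hey]
  have t4 : (star u' ⬝ᵥ S.mulVec u').re = (star e' ⬝ᵥ u').re := by
    rw [hSu', re_dot_comm]
  have expand : star (y - u') ⬝ᵥ S.mulVec (y - u')
      = star y ⬝ᵥ S.mulVec y - star y ⬝ᵥ S.mulVec u'
        - (star u' ⬝ᵥ S.mulVec y - star u' ⬝ᵥ S.mulVec u') := by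
    simp [Matrix.mulVec_sub, dotProduct_sub, sub_dotProduct, star_sub]
    ring
  rw [expand] at key
  simp only [Complex.sub_re] at key
  rw [t1, t2, t3, t4] at key
  linarith

lemma padMT_mulVec {m m' : ℕ} (h : m ≤ m') (v : Fin m' → ℂ) :
    (padM h)ᴴ.mulVec v = fun j => v (Fin.castLE h j) := by
  ext j
  simp [padM, mulVec, dotProduct, conjTranspose_apply]

lemma re_dot_herm {k : ℕ} {A : Matrix (Fin k) (Fin k) ℂ} (hA : A.IsHermitian)
    (x y : Fin k → ℂ) :
    (star x ⬝ᵥ A.mulVec y).re = (star y ⬝ᵥ A.mulVec x).re := by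
  have h1 : star y ᵥ* A = star (A.mulVec y) := by
    rw [star_mulVec, hA.eq]
  rw [dotProduct_mulVec (v := star y), h1, re_dot_comm]
/-- Monotonicity of Gauss quadrature for `t⁻¹`: with `Tₘ = Vₘᴴ A Vₘ` the tridiagonal
matrices from the Lanczos process started with `v₁ = b/‖b‖` (terminating at step `N`,
i.e. `A V_N = V_N T_N`), the scalars `e₁ᴴ Tₘ⁻¹ e₁` are positive reals increasing with `m`,
`e₁ᴴ T_N⁻¹ e₁ = bᴴ A⁻¹ b / ‖b‖²`, and hence
`‖b‖² (e₁ᴴ T_{m+k}⁻¹ e₁ − e₁ᴴ Tₘ⁻¹ e₁) ≤ ‖x_* − xₘ‖_A²` with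
`xₘ = ‖b‖ Vₘ Tₘ⁻¹ e₁` and `x_* = A⁻¹ b`. -/
theorem stmt19 {n N : ℕ} (hN : 0 < N)
    (A : Matrix (Fin n) (Fin n) ℂ) (hA : A.PosDef)
    (b : Fin n → ℂ) (hb : b ≠ 0)
    (V : Matrix (Fin n) (Fin N) ℂ) (hV : Vᴴ * V = 1)
    (hcol0 : (fun i => V i ⟨0, hN⟩) = (((Real.sqrt (∑ i, ‖b i‖ ^ 2))⁻¹ : ℝ) : ℂ) • b)
    (htri : ∀ i j : Fin N,
      ((i : ℤ) - (j : ℤ) > 1 ∨ (j : ℤ) - (i : ℤ) > 1) → (Vᴴ * A * V) i j = 0)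
    (hterm : A * V = V * (Vᴴ * A * V)) :
    let nb : ℝ := Real.sqrt (∑ i, ‖b i‖ ^ 2)
    let T : (m : ℕ) → m ≤ N → Matrix (Fin m) (Fin m) ℂ := fun m hm =>
      (Vᴴ * A * V).submatrix (Fin.castLE hm) (Fin.castLE hm)
    let φ : (m : ℕ) → 0 < m → m ≤ N → ℂ := fun m h0 hm =>
      (Pi.single (⟨0, h0⟩ : Fin m) (1 : ℂ) : Fin m → ℂ) ⬝ᵥ
        (T m hm)⁻¹.mulVec (Pi.single (⟨0, h0⟩ : Fin m) (1 : ℂ))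
    (∀ m (h0 : 0 < m) (hm : m ≤ N), 0 < (φ m h0 hm).re ∧ (φ m h0 hm).im = 0) ∧
    (∀ m m' (h0 : 0 < m) (h0' : 0 < m') (hm : m ≤ N) (hm' : m' ≤ N),
      m ≤ m' → (φ m h0 hm).re ≤ (φ m' h0' hm').re) ∧
    (φ N hN le_rfl = (star b ⬝ᵥ A⁻¹.mulVec b) / ((nb : ℂ) * nb)) ∧
    (∀ m k (h0 : 0 < m) (hmk : m + k ≤ N),
      let hmN : m ≤ N := by omega
      let xm : Fin n → ℂ := (nb : ℂ) •
        (V.submatrix id (Fin.castLE hmN)).mulVec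
          ((T m hmN)⁻¹.mulVec (Pi.single (⟨0, h0⟩ : Fin m) (1 : ℂ)))
      let errA2 : ℝ :=
        (star (A⁻¹.mulVec b - xm) ⬝ᵥ A.mulVec (A⁻¹.mulVec b - xm)).re
      nb ^ 2 * ((φ (m + k) (by omega) hmk).re - (φ m h0 hmN).re) ≤ errA2) := by
  intro nb T φ
  -- basic facts
  have hnbsum : 0 < ∑ i, ‖b i‖ ^ 2 := by
    obtain ⟨i, hi⟩ := Function.ne_iff.mp hb
    exact Finset.sum_pos' (fun j _ => by positivity) ⟨i, Finset.mem_univ i, pow_pos (norm_pos_iff.mpr hi) 2⟩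
  have hnb : 0 < nb := Real.sqrt_pos.mpr hnbsum
  have hM : (Vᴴ * A * V).PosDef := posDef_conj hA hV
  have hTsub : ∀ m (hm : m ≤ N), T m hm = (padM hm)ᴴ * (Vᴴ * A * V) * padM hm :=
    fun m hm => (padM_sub hm _).symm
  have hT : ∀ m (hm : m ≤ N), (T m hm).PosDef := fun m hm => by
    rw [hTsub m hm]; exact posDef_conj hM (padM_conj_one hm)
  have hφ : ∀ m (h0 : 0 < m) (hm : m ≤ N), φ m h0 hm =
      star (Pi.single (⟨0, h0⟩ : Fin m) (1 : ℂ) : Fin m → ℂ) ⬝ᵥ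
        (T m hm)⁻¹.mulVec (Pi.single (⟨0, h0⟩ : Fin m) (1 : ℂ)) := by
    intro m h0 hm
    rw [star_single]
  have hsingle_ne : ∀ m (h0 : 0 < m),
      (Pi.single (⟨0, h0⟩ : Fin m) (1 : ℂ) : Fin m → ℂ) ≠ 0 := by
    intro m h0 h
    simpa using congrFun h ⟨0, h0⟩
  -- positivity
  have pos : ∀ m (h0 : 0 < m) (hm : m ≤ N), 0 < (φ m h0 hm).re ∧ (φ m h0 hm).im = 0 := by
    intro m h0 hm
    have := (hT m hm).inv.dotProduct_mulVec_pos (hsingle_ne m h0)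
    rw [← hφ m h0 hm] at this
    rw [Complex.lt_def] at this
    exact ⟨by simpa using this.1, by simpa using this.2.symm⟩
  -- monotonicity
  have mono : ∀ m m' (h0 : 0 < m) (h0' : 0 < m') (hm : m ≤ N) (hm' : m' ≤ N),
      m ≤ m' → (φ m h0 hm).re ≤ (φ m' h0' hm').re := by
    intro m m' h0 h0' hm hm' hmm'
    rw [hφ m h0 hm, hφ m' h0' hm']
    have hsub : T m hm = (padM hmm')ᴴ * (T m' hm') * padM hmm' := by
      rw [padM_sub]
      ext i j
      rfl
    rw [hsub]
    exact mono_lemma (hT m' hm') (padM_conj_one hmm') (padM_mulVec_single hmm' ⟨0, h0⟩)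
  -- termination identity
  have hdet : IsUnit (Vᴴ*A*V).det := (Matrix.isUnit_iff_isUnit_det _).mp hM.isUnit
  have hAdet : IsUnit A.det := (Matrix.isUnit_iff_isUnit_det _).mp hA.isUnit
  have h1 : V = A⁻¹ * (V * (Vᴴ*A*V)) := by
    rw [← hterm, ← Matrix.mul_assoc, Matrix.nonsing_inv_mul A hAdet, Matrix.one_mul]
  have h2 : V * (Vᴴ*A*V)⁻¹ = A⁻¹ * V := by
    calc V * (Vᴴ*A*V)⁻¹ = (A⁻¹ * (V * (Vᴴ*A*V))) * (Vᴴ*A*V)⁻¹ := by rw [← h1]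
      _ = A⁻¹ * (V * ((Vᴴ*A*V) * (Vᴴ*A*V)⁻¹)) := by simp only [Matrix.mul_assoc]
      _ = A⁻¹ * V := by rw [Matrix.mul_nonsing_inv _ hdet, Matrix.mul_one]
  have h3 : Vᴴ * A⁻¹ * V = (Vᴴ*A*V)⁻¹ := by
    calc Vᴴ * A⁻¹ * V = Vᴴ * (A⁻¹ * V) := Matrix.mul_assoc _ _ _
      _ = Vᴴ * (V * (Vᴴ*A*V)⁻¹) := by rw [h2]
      _ = (Vᴴ * V) * (Vᴴ*A*V)⁻¹ := (Matrix.mul_assoc _ _ _).symm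
      _ = (Vᴴ*A*V)⁻¹ := by rw [hV, Matrix.one_mul]
  have hTN : T N le_rfl = Vᴴ*A*V := by ext i j; rfl
  have hVe : V.mulVec (Pi.single (⟨0,hN⟩ : Fin N) 1) = ((nb⁻¹ : ℝ) : ℂ) • b := by
    have h4 : V.mulVec (Pi.single (⟨0,hN⟩ : Fin N) 1) = fun i => V i ⟨0,hN⟩ := by
      rw [mulVec_single]; funext i; exact mul_one _
    rw [h4, hcol0]
  have term : φ N hN le_rfl = (star b ⬝ᵥ A⁻¹.mulVec b) / ((nb : ℂ) * nb) := by
    rw [hφ N hN le_rfl, hTN, ← h3, quad_conj, hVe]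
    rw [star_smul, smul_dotProduct, Matrix.mulVec_smul, dotProduct_smul]
    simp only [Complex.star_def, Complex.conj_ofReal, smul_eq_mul, Complex.ofReal_inv]
    have hz : ((nb : ℂ)) ≠ 0 := by
      exact_mod_cast Complex.ofReal_ne_zero.mpr (ne_of_gt hnb)
    field_simp
    simp only [one_div, map_inv₀, Complex.conj_ofReal]
    rw [mul_inv_cancel₀ hz, one_mul]
  refine ⟨pos, mono, term, ?_⟩
  intro m k h0 hmk
  intro hmN xm errA2
  set e : Fin m → ℂ := Pi.single ⟨0, h0⟩ 1 with he
  set u : Fin m → ℂ := (T m hmN)⁻¹.mulVec e with hu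
  set W : Matrix (Fin n) (Fin m) ℂ := V * padM hmN with hW
  have hxm : xm = (nb : ℂ) • W.mulVec u := by
    rw [hW, mul_padM hmN V]
  have hWAW : Wᴴ * A * W = T m hmN := by
    rw [hW, hTsub m hmN]
    simp only [conjTranspose_mul, Matrix.mul_assoc]
  have hTu : (T m hmN).mulVec u = e := inv_mulVec_cancel (hT m hmN) e
  have hφm : φ m h0 hmN = star e ⬝ᵥ u := hφ m h0 hmN
  set xs : Fin n → ℂ := A⁻¹.mulVec b with hxs
  have hAxs : A.mulVec xs = b := inv_mulVec_cancel hA b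
  have hznb : ((nb : ℝ) : ℂ) ≠ 0 := Complex.ofReal_ne_zero.mpr (ne_of_gt hnb)
  -- b in terms of V e₁
  have hb_eq : b = (nb : ℂ) • V.mulVec (Pi.single (⟨0, hN⟩ : Fin N) 1) := by
    rw [hVe, smul_smul, ← Complex.ofReal_mul,
      mul_inv_cancel₀ (ne_of_gt hnb), Complex.ofReal_one, one_smul]
  have hVTb : Vᴴ.mulVec b = (nb : ℂ) • (Pi.single (⟨0, hN⟩ : Fin N) 1 : Fin N → ℂ) := by
    rw [hb_eq, Matrix.mulVec_smul, mulVec_mulVec, hV, Matrix.one_mulVec]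
  have hWTb : Wᴴ.mulVec b = (nb : ℂ) • e := by
    rw [hW, conjTranspose_mul, ← mulVec_mulVec, hVTb, Matrix.mulVec_smul, padMT_mulVec]
    congr 1
    funext j
    rw [he]
    simp [Pi.single_apply, Fin.ext_iff]
  -- the quadratic form of W.mulVec u
  have hWq : (star (W.mulVec u) ⬝ᵥ A.mulVec (W.mulVec u)) = star u ⬝ᵥ e := by
    rw [← quad_conj, hWAW, hTu]
  have hWb : star (W.mulVec u) ⬝ᵥ b = star u ⬝ᵥ ((nb : ℂ) • e) := by
    rw [star_mulVec, ← dotProduct_mulVec, hWTb]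
  -- the four re computations
  have hq : star b ⬝ᵥ A⁻¹.mulVec b = φ N hN le_rfl * ((nb : ℂ) * nb) := by
    rw [term, div_mul_cancel₀]
    exact mul_ne_zero hznb hznb
  have r1 : (star xs ⬝ᵥ A.mulVec xs).re = nb ^ 2 * (φ N hN le_rfl).re := by
    rw [hAxs, re_dot_comm, hxs, hq, ← Complex.ofReal_mul, mul_comm (φ N hN le_rfl),
      Complex.re_ofReal_mul]
    ring
  have r2 : (star xm ⬝ᵥ A.mulVec xm).re = nb ^ 2 * (φ m h0 hmN).re := by
    rw [hxm, star_smul, smul_dotProduct, Matrix.mulVec_smul, dotProduct_smul, hWq,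
      smul_eq_mul, smul_eq_mul, Complex.star_def, Complex.conj_ofReal,
      Complex.re_ofReal_mul, Complex.re_ofReal_mul, re_dot_comm, hφm]
    ring
  have r3 : (star xm ⬝ᵥ A.mulVec xs).re = nb ^ 2 * (φ m h0 hmN).re := by
    rw [hAxs, hxm, star_smul, smul_dotProduct, hWb, dotProduct_smul,
      smul_eq_mul, smul_eq_mul, Complex.star_def, Complex.conj_ofReal,
      Complex.re_ofReal_mul, Complex.re_ofReal_mul, re_dot_comm, hφm]
    ring
  have r4 : (star xs ⬝ᵥ A.mulVec xm).re = (star xm ⬝ᵥ A.mulVec xs).re :=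
    re_dot_herm hA.isHermitian _ _
  have expand : star (xs - xm) ⬝ᵥ A.mulVec (xs - xm)
      = star xs ⬝ᵥ A.mulVec xs - star xs ⬝ᵥ A.mulVec xm
        - (star xm ⬝ᵥ A.mulVec xs - star xm ⬝ᵥ A.mulVec xm) := by
    simp [Matrix.mulVec_sub, dotProduct_sub, sub_dotProduct, star_sub]
    ring
  have herr : errA2 = nb ^ 2 * ((φ N hN le_rfl).re - (φ m h0 hmN).re) := by
    show (star (xs - xm) ⬝ᵥ A.mulVec (xs - xm)).re = _
    rw [expand]
    simp only [Complex.sub_re]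
    rw [r1, r2, r3, r4, r3]
    ring
  have hmono := mono (m + k) N (by omega) hN hmk le_rfl (by omega)
  rw [herr]
  have hsq : (0:ℝ) ≤ nb ^ 2 := sq_nonneg nb
  nlinarith [hmono]
end
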